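/- Let 𝓐 be an antichain of subsets of a finite set X with |X| = n. Then 2|𝓐| + |∇̄(𝓐)| ≤ 2·C(n, ⌊n/2⌋) + C(n, ⌊n/2⌋ + 1), and this bound is tight (attained, e.g., by the antichain of all ⌊n/2⌋-subsets of X). -/

import Mathlib

open Finset

variable {α : Type*} [DecidableEq α]

/-- The set of minimal elements of a family (under inclusion). -/
def minsF (F : Finset (Finset α)) : Finset (Finset α) :=
  F.filter fun h => ∀ g ∈ F, g ⊆ h → g = h

/-- The shade ∇(𝓐) = { B : ∃ A ∈ 𝓐, A ⊆ B and |B| = |A| + 1 }. -/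
def shade [Fintype α] (A : Finset (Finset α)) : Finset (Finset α) :=
  (Finset.univ : Finset (Finset α)).filter fun B => ∃ a ∈ A, a ⊆ B ∧ B.card = a.card + 1

/-- The first upward level ∇̄(𝓐) = min(∇(𝓐)). -/
def nablaBar [Fintype α] (A : Finset (Finset α)) : Finset (Finset α) :=
  minsF (shade A)


set_option linter.unusedSectionVars false


def SInv (n : ℕ) (l : List (Finset α)) : Prop :=
  l ≠ [] ∧ l.Pairwise (· ⊆ ·) ∧
    ∃ k, l.map Finset.card = List.range' k l.length ∧ l.length + 2 * k = n + 1

omit [DecidableEq α] in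
lemma subset_getLast {l : List (Finset α)} (h : l.Pairwise (· ⊆ ·)) (hne : l ≠ []) :
    ∀ a ∈ l, a ⊆ l.getLast hne := by
  induction l with
  | nil => simp
  | cons b t ih =>
    intro x hx
    rcases eq_or_ne t [] with rfl | htne
    · simp at hx; subst hx; simp
    · rw [List.getLast_cons htne]
      rcases List.mem_cons.1 hx with rfl | hat
      · exact (List.pairwise_cons.1 h).1 _ (List.getLast_mem htne)
      · exact ih (List.pairwise_cons.1 h).2 htne x hat

lemma step1 {n : ℕ} {a : α} {s : Finset α} (ha : a ∉ s) {l : List (Finset α)}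
    (hI : SInv n l) (hsub : ∀ T ∈ l, T ⊆ s) :
    SInv (n + 1) (l ++ [insert a l.getLast!]) ∧
      ∀ T ∈ l ++ [insert a l.getLast!], T ⊆ insert a s := by
  obtain ⟨hne, hpair, k, hcards, hlen⟩ := hI
  have hlast! : l.getLast! = l.getLast hne :=
    List.getLast!_of_getLast? (List.getLast?_eq_getLast (l := l) hne)
  set last := l.getLast hne with hlastdef
  have hlastmem : last ∈ l := List.getLast_mem hne
  have hlasts : last ⊆ s := hsub _ hlastmem
  have hanotin : a ∉ last := fun h => ha (hlasts h)
  have ht : l.length = (l.length - 1) + 1 := (Nat.succ_pred_eq_of_pos (List.length_pos_iff.2 hne)).symm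
  have hcardlast : last.card = k + (l.length - 1) := by
    have h1 : (l.map Finset.card).getLast? = some last.card := by
      rw [List.getLast?_eq_getLast (by simp [hne]), List.getLast_map]
    rw [hcards, ht, List.range'_concat, List.getLast?_concat] at h1
    have := Option.some.inj h1
    omega
  have hcardins : (insert a last).card = k + l.length := by
    rw [Finset.card_insert_of_notMem hanotin, hcardlast]; omega
  refine ⟨⟨by simp, ?_, k, ?_, ?_⟩, ?_⟩
  · rw [List.pairwise_append]
    refine ⟨hpair, by simp, ?_⟩
    intro x hx y hy
    simp only [List.mem_singleton] at hy
    subst hy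
    rw [hlast!]
    exact (subset_getLast hpair hne x hx).trans (Finset.subset_insert _ _)
  · rw [List.map_append, hcards, hlast!]
    simp only [List.map_cons, List.map_nil, List.length_append, List.length_singleton]
    rw [hcardins]
    rw [show List.range' k (l.length + 1) = List.range' k l.length ++ [k + 1 * l.length] from
      List.range'_concat (s := k) (n := l.length)]
    simp
  · simp only [List.length_append, List.length_singleton]; omega
  · intro T hT
    rcases List.mem_append.1 hT with h | h
    · exact (hsub T h).trans (Finset.subset_insert _ _)
    · simp only [List.mem_singleton] at h
      subst h
      rw [hlast!]
      exact Finset.insert_subset_insert _ hlasts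

lemma step2 {n : ℕ} {a : α} {s : Finset α} (ha : a ∉ s) {l : List (Finset α)}
    (hI : SInv n l) (hsub : ∀ T ∈ l, T ⊆ s) (h2 : 2 ≤ l.length) :
    SInv (n + 1) (l.dropLast.map (insert a)) ∧
      ∀ T ∈ l.dropLast.map (insert a), T ⊆ insert a s := by
  obtain ⟨hne, hpair, k, hcards, hlen⟩ := hI
  have hdlmem : ∀ T ∈ l.dropLast, T ∈ l := fun T h => (List.dropLast_sublist l).subset h
  have hdllen : l.dropLast.length = l.length - 1 := List.length_dropLast (xs := l)
  refine ⟨⟨?_, ?_, k + 1, ?_, ?_⟩, ?_⟩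
  · intro h
    have := congrArg List.length h
    simp [hdllen] at this
    omega
  · exact (List.Pairwise.sublist (List.dropLast_sublist l) hpair).map _
      (fun {x y} h => Finset.insert_subset_insert _ h)
  · rw [List.map_map]
    have hcg : l.dropLast.map (Finset.card ∘ insert a) = l.dropLast.map (fun T => 1 + T.card) := by
      apply List.map_congr_left
      intro T hT
      have : a ∉ T := fun h => ha (hsub T (hdlmem T hT) h)
      simp [Finset.card_insert_of_notMem this, Nat.add_comm]
    rw [hcg, show (fun T : Finset α => 1 + T.card) = ((fun x => 1 + x) ∘ Finset.card) from rfl,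
      ← List.map_map, List.map_dropLast, hcards]
    have ht : l.length = (l.length - 1) + 1 := by omega
    rw [ht, List.range'_concat, List.dropLast_concat, List.map_add_range']
    simp only [List.length_map, hdllen]
    rw [Nat.add_comm 1 k]
  · simp only [List.length_map, hdllen]; omega
  · intro T hT
    simp only [List.mem_map] at hT
    obtain ⟨u, hu, rfl⟩ := hT
    exact Finset.insert_subset_insert _ (hsub u (hdlmem u hu))

-- the chain-splitting function
def Fstep (a : α) (l : List (Finset α)) : List (List (Finset α)) :=
  (l ++ [insert a l.getLast!]) ::
    (if l.length ≤ 1 then [] else [(l.dropLast).map (insert a)])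

def toM (l : List (Finset α)) : Multiset (Finset α) := l

lemma fstep_sum (a : α) (l : List (Finset α)) (hne : l ≠ []) :
    ((Fstep a l).map toM).sum
      = toM l + Multiset.map (insert a) (toM l) := by
  simp only [toM]
  have hlast! : l.getLast! = l.getLast hne :=
    List.getLast!_of_getLast? (List.getLast?_eq_getLast (l := l) hne)
  by_cases h1 : l.length ≤ 1
  · have : l.length = 1 := by
      have := List.length_pos_iff.2 hne; omega
    obtain ⟨T, rfl⟩ := List.length_eq_one_iff.1 this
    unfold Fstep
    norm_num
    rfl
  · unfold Fstep
    rw [if_neg h1]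
    have key : (l.dropLast.map (insert a) : Multiset (Finset α)) + {insert a l.getLast!}
        = Multiset.map (insert a) (l : Multiset (Finset α)) := by
      rw [hlast!]
      conv_rhs => rw [← List.dropLast_append_getLast hne]
      rw [show ((l.dropLast ++ [l.getLast hne] : List (Finset α)) : Multiset (Finset α))
        = ↑l.dropLast + ↑([l.getLast hne] : List (Finset α)) from Multiset.coe_add _ _,
        Multiset.map_add, Multiset.map_coe, Multiset.map_coe]
      rfl
    show (↑(l ++ [insert a l.getLast!]) : Multiset (Finset α)) + (↑(l.dropLast.map (insert a)) + 0) = _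
    rw [← key]
    rw [show ((l ++ [insert a l.getLast!] : List (Finset α)) : Multiset (Finset α))
      = ↑l + ↑([insert a l.getLast!] : List (Finset α)) from Multiset.coe_add _ _]
    have : (([insert a l.getLast!] : List (Finset α)) : Multiset (Finset α)) = {insert a l.getLast!} := rfl
    rw [this]
    abel

lemma flatmap_sum (a : α) : ∀ (L : List (List (Finset α))), (∀ l ∈ L, l ≠ []) →
    ((L.flatMap (Fstep a)).map toM).sum
      = (L.map toM).sum + Multiset.map (insert a) (L.map toM).sum := by
  intro L
  induction L with
  | nil => simp
  | cons l L ih =>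
    intro h
    have hfs : ((Fstep a l).map toM).sum
        = toM l + Multiset.map (insert a) (toM l) :=
      fstep_sum a l (h l List.mem_cons_self)
    rw [List.flatMap_cons, List.map_append, List.sum_append, hfs,
      ih (fun x hx => h x (List.mem_cons_of_mem _ hx))]
    simp only [List.map_cons, List.sum_cons, Multiset.map_add]
    abel

lemma powerset_insert_val {a : α} {s : Finset α} (ha : a ∉ s) :
    (insert a s).powerset.val = s.powerset.val + Multiset.map (insert a) s.powerset.val := by
  have hdisj : Disjoint s.powerset (s.powerset.image (insert a)) := by
    rw [Finset.disjoint_left]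
    intro T hT hT2
    simp only [Finset.mem_image, Finset.mem_powerset] at hT hT2
    obtain ⟨u, _, rfl⟩ := hT2
    exact ha (hT (Finset.mem_insert_self a u))
  have h2 : (insert a s).powerset = s.powerset.disjUnion _ hdisj := by
    rw [Finset.disjUnion_eq_union, Finset.powerset_insert]
  rw [h2,
    show (s.powerset.disjUnion _ hdisj).val
      = s.powerset.val + (s.powerset.image (insert a)).val from rfl,
    Finset.image_val_of_injOn]
  intro T hT u hu h
  simp only [Finset.coe_powerset, Set.mem_preimage, Set.mem_powerset_iff] at hT hu
  have hat : a ∉ T := fun hmem => ha (hT hmem)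
  have hau : a ∉ u := fun hmem => ha (hu hmem)
  rw [← Finset.erase_insert hat, ← Finset.erase_insert hau, h]

lemma exists_scd (s : Finset α) :
    ∃ L : List (List (Finset α)),
      (∀ l ∈ L, SInv s.card l ∧ ∀ T ∈ l, T ⊆ s) ∧
      (L.map toM).sum = s.powerset.val := by
  induction s using Finset.induction_on with
  | empty =>
    refine ⟨[[∅]], ?_, ?_⟩
    · rintro l hl
      simp only [List.mem_singleton] at hl
      subst hl
      exact ⟨⟨by simp, by simp, 0, by simp, by simp⟩, by simp⟩
    · simp [Finset.powerset_empty, toM]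
  | @insert a s ha ih =>
    obtain ⟨L, hL, hsum⟩ := ih
    refine ⟨L.flatMap (Fstep a), ?_, ?_⟩
    · intro l' hl'
      obtain ⟨l, hl, hl'mem⟩ := List.mem_flatMap.1 hl'
      obtain ⟨hI, hsub⟩ := hL l hl
      rw [Finset.card_insert_of_notMem ha]
      unfold Fstep at hl'mem
      rcases List.mem_cons.1 hl'mem with rfl | hrest
      · exact step1 ha hI hsub
      · by_cases h1 : l.length ≤ 1
        · rw [if_pos h1] at hrest; simp at hrest
        · rw [if_neg h1] at hrest
          simp only [List.mem_singleton] at hrest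
          subst hrest
          exact step2 ha hI hsub (by omega)
    · rw [flatmap_sum a L (fun l hl => (hL l hl).1.1), hsum, powerset_insert_val ha]

lemma countP_le_one_of_pairwise {β : Type*} {p : β → Bool} :
    ∀ {l : List β}, l.Pairwise (fun x y => ¬(p x ∧ p y)) → l.countP p ≤ 1 := by
  intro l
  induction l with
  | nil => simp
  | cons x t ih =>
    intro h
    rw [List.countP_cons]
    obtain ⟨hx, ht⟩ := List.pairwise_cons.1 h
    by_cases hpx : p x
    · have : t.countP p = 0 := by
        rw [List.countP_eq_zero]
        intro y hy hpy
        exact hx y hy ⟨hpx, hpy⟩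
      simp [this, hpx]
    · simp only [hpx, if_false]
      simpa using ih ht

lemma countP_sum_list {p : Finset α → Prop} [DecidablePred p] :
    ∀ L : List (List (Finset α)),
      Multiset.countP p (L.map toM).sum
        = (L.map (fun l => l.countP (fun S => decide (p S)))).sum := by
  intro L
  induction L with
  | nil => simp
  | cons l L ih =>
    simp only [List.map_cons, List.sum_cons, Multiset.countP_add, ih]
    congr 1

lemma card_eq_sum_countP [Fintype α] (L : List (List (Finset α)))
    (hsum : (L.map toM).sum = (univ : Finset α).powerset.val) (G : Finset (Finset α)) :
    G.card = (L.map (fun l => l.countP (fun S => decide (S ∈ G)))).sum := by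
  rw [← countP_sum_list L, hsum, Finset.powerset_univ]
  rw [Multiset.countP_eq_card_filter]
  have h1 : Multiset.filter (· ∈ G) (univ : Finset (Finset α)).val
      = ((univ : Finset (Finset α)).filter (· ∈ G)).val := rfl
  rw [h1]
  have h2 : (univ : Finset (Finset α)).filter (· ∈ G) = G := by
    ext x; simp
  rw [h2]
  rfl

lemma count_level {l : List (Finset α)} [Fintype α] {k : ℕ}
    (hcards : l.map Finset.card = List.range' k l.length) (j : ℕ) :
    l.countP (fun S => decide (S ∈ powersetCard j univ))
      = List.count j (List.range' k l.length) := by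
  rw [← hcards, List.count_eq_countP, List.countP_map]
  apply List.countP_congr
  intro S hS
  simp [Finset.mem_powersetCard_univ]

lemma chain_bound [Fintype α] {A B : Finset (Finset α)}
    (hA : ∀ f ∈ A, ∀ g ∈ A, f ⊆ g → f = g)
    (hB : ∀ f ∈ B, ∀ g ∈ B, f ⊆ g → f = g)
    (hd : ∀ S ∈ A, S ∉ B)
    {l : List (Finset α)} (hI : SInv (Fintype.card α) l) :
    2 * l.countP (fun S => decide (S ∈ A)) + l.countP (fun S => decide (S ∈ B))
      ≤ 2 * l.countP (fun S => decide (S ∈ powersetCard (Fintype.card α / 2) univ))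
        + l.countP (fun S => decide (S ∈ powersetCard (Fintype.card α / 2 + 1) univ)) := by
  obtain ⟨hne, hpair, k, hcards, hlen⟩ := hI
  set n := Fintype.card α with hn
  set m := n / 2 with hm
  have hdm : n = 2 * m + n % 2 := by rw [hm]; omega
  have hmod : n % 2 < 2 := Nat.mod_lt _ (by norm_num)
  have hlpos : 0 < l.length := List.length_pos_iff.2 hne
  have hnodup : l.Nodup := by
    apply List.Nodup.of_map Finset.card
    rw [hcards]
    exact List.nodup_range' 1 (by simp)
  have hmmem : m ∈ List.range' k l.length := by
    rw [List.mem_range'_1]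
    constructor <;> omega
  have hm1 : l.countP (fun S => decide (S ∈ powersetCard m univ)) = 1 := by
    rw [count_level hcards m]
    exact List.count_eq_one_of_mem (List.nodup_range' 1 (by simp)) hmmem
  by_cases h1 : l.length = 1
  · obtain ⟨S, rfl⟩ := List.length_eq_one_iff.1 h1
    rw [hm1]
    have hcb : ∀ (G : Finset (Finset α)),
        List.countP (fun S => decide (S ∈ G)) [S] = if S ∈ G then 1 else 0 := by
      intro G; rw [List.countP_singleton]; simp
    rw [hcb, hcb]
    by_cases hSA : S ∈ A
    · have : S ∉ B := hd S hSA
      simp [hSA, this]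
    · simp [hSA]
      split <;> omega
  · have hl2 : 2 ≤ l.length := by omega
    have hm2 : l.countP (fun S => decide (S ∈ powersetCard (m + 1) univ)) = 1 := by
      rw [count_level hcards (m + 1)]
      apply List.count_eq_one_of_mem (List.nodup_range' 1 (by simp))
      rw [List.mem_range'_1]
      constructor <;> omega
    have hAle : l.countP (fun S => decide (S ∈ A)) ≤ 1 := by
      apply countP_le_one_of_pairwise
      refine (hpair.and hnodup).imp ?_
      rintro a b ⟨hsub, hneq⟩ ⟨ha', hb'⟩
      simp only [decide_eq_true_eq] at ha' hb'
      exact hneq (hA a ha' b hb' hsub)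
    have hBle : l.countP (fun S => decide (S ∈ B)) ≤ 1 := by
      apply countP_le_one_of_pairwise
      refine (hpair.and hnodup).imp ?_
      rintro a b ⟨hsub, hneq⟩ ⟨ha', hb'⟩
      simp only [decide_eq_true_eq] at ha' hb'
      exact hneq (hB a ha' b hb' hsub)
    rw [hm1, hm2]
    omega

lemma main_bound [Fintype α] {A B : Finset (Finset α)}
    (hA : ∀ f ∈ A, ∀ g ∈ A, f ⊆ g → f = g)
    (hB : ∀ f ∈ B, ∀ g ∈ B, f ⊆ g → f = g)
    (hd : ∀ S ∈ A, S ∉ B) :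
    2 * A.card + B.card ≤
      2 * (Fintype.card α).choose (Fintype.card α / 2) +
        (Fintype.card α).choose (Fintype.card α / 2 + 1) := by
  obtain ⟨L, hL, hsum⟩ := exists_scd (univ : Finset α)
  rw [Finset.card_univ] at hL
  set n := Fintype.card α with hn
  set m := n / 2 with hm
  have key : ∀ G : Finset (Finset α),
      G.card = (L.map (fun l => l.countP (fun S => decide (S ∈ G)))).sum :=
    card_eq_sum_countP L hsum
  have e1 : 2 * A.card + B.card
      = (L.map (fun l => 2 * l.countP (fun S => decide (S ∈ A))
          + l.countP (fun S => decide (S ∈ B)))).sum := by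
    rw [key A, key B, List.sum_map_add]
    congr 1
    rw [← List.sum_map_mul_left]
  have e2 : 2 * n.choose m + n.choose (m + 1)
      = (L.map (fun l => 2 * l.countP (fun S => decide (S ∈ powersetCard m univ))
          + l.countP (fun S => decide (S ∈ powersetCard (m + 1) univ)))).sum := by
    have c1 : (powersetCard m (univ : Finset α)).card = n.choose m := by
      rw [Finset.card_powersetCard, Finset.card_univ]
    have c2 : (powersetCard (m + 1) (univ : Finset α)).card = n.choose (m + 1) := by
      rw [Finset.card_powersetCard, Finset.card_univ]
    rw [← c1, ← c2, key (powersetCard m univ), key (powersetCard (m + 1) univ),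
      List.sum_map_add]
    congr 1
    rw [← List.sum_map_mul_left]
  rw [e1, e2]
  apply List.sum_le_sum
  intro l hl
  exact chain_bound hA hB hd (hL l hl).1

lemma mem_minsF {F : Finset (Finset α)} {h : Finset α} :
    h ∈ minsF F ↔ h ∈ F ∧ ∀ g ∈ F, g ⊆ h → g = h := by
  simp [minsF]

lemma mem_shade [Fintype α] {A : Finset (Finset α)} {B : Finset α} :
    B ∈ shade A ↔ ∃ a ∈ A, a ⊆ B ∧ B.card = a.card + 1 := by
  simp [shade]

/-- Theorem 6.9: for every antichain 𝓐 of subsets of X with |X| = n,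
2|𝓐| + |∇̄(𝓐)| ≤ 2·C(n,⌊n/2⌋) + C(n,⌊n/2⌋+1), and the bound is tight,
being attained by some antichain (e.g. all ⌊n/2⌋-subsets of X). -/
theorem stmt_19 {α : Type*} [DecidableEq α] [Fintype α] [Nonempty α] :
    (∀ A : Finset (Finset α), A.Nonempty →
      (∀ f ∈ A, ∀ g ∈ A, f ⊆ g → f = g) →
      2 * A.card + (nablaBar A).card ≤
        2 * (Fintype.card α).choose (Fintype.card α / 2) +
          (Fintype.card α).choose (Fintype.card α / 2 + 1)) ∧
    ∃ A : Finset (Finset α), A.Nonempty ∧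
      (∀ f ∈ A, ∀ g ∈ A, f ⊆ g → f = g) ∧
      2 * A.card + (nablaBar A).card =
        2 * (Fintype.card α).choose (Fintype.card α / 2) +
          (Fintype.card α).choose (Fintype.card α / 2 + 1) := by
  constructor
  · intro A _ hA
    apply main_bound hA
    · -- nablaBar A is an antichain
      intro f hf g hg hsub
      rw [nablaBar, mem_minsF] at hf hg
      exact hg.2 f hf.1 hsub
    · -- A disjoint from nablaBar A
      intro S hS hS2
      rw [nablaBar, mem_minsF] at hS2
      have hshade := hS2.1
      rw [mem_shade] at hshade
      obtain ⟨a, haA, hsub, hcard⟩ := hshade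
      have heq : a = S := hA a haA S hS hsub
      rw [heq] at hcard
      omega
  · set n := Fintype.card α with hn
    set m := n / 2 with hm
    have hnpos : 0 < n := Fintype.card_pos
    refine ⟨powersetCard m univ, ?_, ?_, ?_⟩
    · rw [Finset.powersetCard_nonempty]
      rw [Finset.card_univ]
      exact Nat.div_le_self n 2
    · intro f hf g hg hsub
      rw [Finset.mem_powersetCard_univ] at hf hg
      exact Finset.eq_of_subset_of_card_le hsub (by omega)
    · have hshade : shade (powersetCard m univ) = powersetCard (m + 1) (univ : Finset α) := by
        ext B
        rw [mem_shade, Finset.mem_powersetCard_univ]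
        constructor
        · rintro ⟨a, haA, hsub, hcard⟩
          rw [Finset.mem_powersetCard_univ] at haA
          omega
        · intro hB
          obtain ⟨a, hsub, hcard⟩ := Finset.exists_subset_card_eq (s := B) (n := m) (by omega)
          exact ⟨a, Finset.mem_powersetCard_univ.2 hcard, hsub, by omega⟩
      have hmins : nablaBar (powersetCard m univ) = powersetCard (m + 1) (univ : Finset α) := by
        rw [nablaBar, hshade]
        ext h
        rw [mem_minsF]
        constructor
        · exact fun hh => hh.1
        · intro hh
          refine ⟨hh, fun g hg hsub => ?_⟩
          rw [Finset.mem_powersetCard_univ] at hh hg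
          exact Finset.eq_of_subset_of_card_le hsub (by omega)
      rw [hmins, Finset.card_powersetCard, Finset.card_powersetCard, Finset.card_univ]
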